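/- Let Λ̃ : ℝ → ℝ be continuously differentiable with Λ̃'(ẽ) ≠ 0 for every ẽ, and let h : ℝ × ℝ³ → ℝ (arguments (ẽ, q¹, q², q³)) be twice continuously differentiable satisfying, at every point: ∂²h/∂q^A∂q^B = 0 for all A ≠ B; ∂²h/∂q^B∂ẽ = 0 for all B; and ∂²h/∂ẽ² = Λ̃'(ẽ) · ∂²h/∂(q^B)² for every B = 1,2,3. Then there exist constants α, c, d ∈ ℝ and β ∈ ℝ³ such that h(ẽ, q) = 2α ∫₀^{ẽ} Λ̃(s) ds + α‖q‖² + c·ẽ + Σ_A β_A q^A + d for all (ẽ, q), where ‖q‖² = Σ_A (q^A)². -/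

import Mathlib

namespace Stmt13Aux

abbrev E := ℝ × (Fin 3 → ℝ)

lemma lineDeriv' (f : E → ℝ) (hf : Differentiable ℝ f) (p v : E) (t : ℝ) :
    HasDerivAt (fun s : ℝ => f (p + s • v)) (fderiv ℝ f (p + t • v) v) t := by
  have h1 : HasDerivAt (fun s : ℝ => p + s • v) v t := by
    simpa using ((hasDerivAt_id t).smul_const v).const_add p
  exact ((hf (p + t • v)).hasFDerivAt.comp_hasDerivAt t h1)

lemma lineConst (f : E → ℝ) (hf : Differentiable ℝ f) (v : E)
    (hv : ∀ z, fderiv ℝ f z v = 0) (p : E) (t : ℝ) : f (p + t • v) = f p := by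
  have hD : ∀ s : ℝ, HasDerivAt (fun s : ℝ => f (p + s • v)) 0 s := by
    intro s
    have := lineDeriv' f hf p v s
    rwa [hv] at this
  have := is_const_of_deriv_eq_zero (f := fun s : ℝ => f (p + s • v))
    (fun s => (hD s).differentiableAt) (fun s => (hD s).deriv) t 0
  simpa using this

lemma sameDeriv (f g k : ℝ → ℝ) (hf : ∀ t, HasDerivAt f (k t) t)
    (hg : ∀ t, HasDerivAt g (k t) t) (h0 : f 0 = g 0) (t : ℝ) : f t = g t := by
  have hd : ∀ s, HasDerivAt (fun u => f u - g u) 0 s := fun s => by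
    simpa using (hf s).fun_sub (hg s)
  have := is_const_of_deriv_eq_zero (f := fun u => f u - g u)
    (fun s => (hd s).differentiableAt) (fun s => (hd s).deriv) t 0
  simp only [h0, sub_self] at this
  linarith [this]

lemma decomp (y : Fin 3 → ℝ) :
    (((0 : ℝ), y) : E) = ∑ B : Fin 3, y B • (((0 : ℝ), Pi.single B (1 : ℝ)) : E) := by
  apply Prod.ext
  · rw [Prod.fst_sum]; simp
  · rw [Prod.snd_sum]
    funext A
    simp [Finset.sum_apply, Pi.single_apply]

lemma lineE (q : Fin 3 → ℝ) (s : ℝ) :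
    (((0 : ℝ), q) : E) + s • (((1 : ℝ), (0 : Fin 3 → ℝ)) : E) = (s, q) := by
  simp [Prod.ext_iff]

lemma single_smul' (B : Fin 3) (s : ℝ) :
    s • (Pi.single B (1 : ℝ) : Fin 3 → ℝ) = Pi.single B s := by
  funext A
  simp [Pi.smul_apply, Pi.single_apply, mul_ite]

lemma lineQ (e : ℝ) (q : Fin 3 → ℝ) (B : Fin 3) (s : ℝ) :
    ((e, q) : E) + s • (((0 : ℝ), Pi.single B (1 : ℝ)) : E) = (e, q + Pi.single B s) := by
  simp [Prod.ext_iff, single_smul']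

lemma lineDerivE (f : E → ℝ) (hf : Differentiable ℝ f) (q : Fin 3 → ℝ) (t : ℝ) :
    HasDerivAt (fun s : ℝ => f (s, q)) (fderiv ℝ f (t, q) ((1 : ℝ), (0 : Fin 3 → ℝ))) t := by
  simpa [lineE] using lineDeriv' f hf ((0 : ℝ), q) ((1 : ℝ), (0 : Fin 3 → ℝ)) t

lemma lineDerivQ (f : E → ℝ) (hf : Differentiable ℝ f) (e : ℝ) (q : Fin 3 → ℝ)
    (B : Fin 3) (t : ℝ) :
    HasDerivAt (fun s : ℝ => f (e, q + Pi.single B s))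
      (fderiv ℝ f (e, q + Pi.single B t) ((0 : ℝ), Pi.single B 1)) t := by
  simpa [lineQ, single_smul'] using lineDeriv' f hf ((e, q) : E) ((0 : ℝ), Pi.single B 1) t

end Stmt13Aux

open Stmt13Aux in
/-- classification of solutions of the defining system for the Cattaneo
system (constant relaxation time), in density variables `(ẽ, q) ∈ ℝ × ℝ³`.  If
`Λ̃' ≠ 0` everywhere and a C² function `h` satisfies `∂²h/∂q^A∂q^B = 0` (`A ≠ B`),
`∂²h/∂q^B∂ẽ = 0`, and `∂²h/∂ẽ² = Λ̃'(ẽ) ∂²h/∂(q^B)²` for every `B`, then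
`h(ẽ,q) = 2α ∫₀^{ẽ} Λ̃ + α‖q‖² + c ẽ + ⟨β, q⟩ + d` for some constants `α, c, d, β`. -/
theorem stmt_13 (Λt : ℝ → ℝ) (hΛ : ContDiff ℝ 1 Λt) (hΛ' : ∀ e : ℝ, deriv Λt e ≠ 0)
    (h : ℝ × (Fin 3 → ℝ) → ℝ) (hh : ContDiff ℝ 2 h)
    (hqq : ∀ (p : ℝ × (Fin 3 → ℝ)) (A B : Fin 3), A ≠ B →
      fderiv ℝ (fun z => fderiv ℝ h z ((0 : ℝ), Pi.single B 1)) p ((0 : ℝ), Pi.single A 1)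
        = 0)
    (hqe : ∀ (p : ℝ × (Fin 3 → ℝ)) (B : Fin 3),
      fderiv ℝ (fun z => fderiv ℝ h z ((1 : ℝ), (0 : Fin 3 → ℝ))) p
        ((0 : ℝ), Pi.single B 1) = 0)
    (hee : ∀ (p : ℝ × (Fin 3 → ℝ)) (B : Fin 3),
      fderiv ℝ (fun z => fderiv ℝ h z ((1 : ℝ), (0 : Fin 3 → ℝ))) p
          ((1 : ℝ), (0 : Fin 3 → ℝ)) =
        deriv Λt p.1 *
          fderiv ℝ (fun z => fderiv ℝ h z ((0 : ℝ), Pi.single B 1)) p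
            ((0 : ℝ), Pi.single B 1)) :
    ∃ (α c d : ℝ) (β : Fin 3 → ℝ), ∀ (e : ℝ) (q : Fin 3 → ℝ),
      h (e, q) = 2 * α * (∫ s in (0 : ℝ)..e, Λt s) + α * (∑ A, q A ^ 2) + c * e +
        (∑ A, β A * q A) + d := by
  classical
  -- differentiability facts
  have hd : Differentiable ℝ h := hh.differentiable (by norm_num)
  have hfd1 : ContDiff ℝ 1 (fderiv ℝ h) := hh.fderiv_right (m := 1) (by norm_num)
  have hd' : Differentiable ℝ (fderiv ℝ h) := hfd1.differentiable (by norm_num)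
  have hdw : ∀ w : E, Differentiable ℝ (fun z : E => fderiv ℝ h z w) := by
    intro w
    exact ((ContinuousLinearMap.apply ℝ ℝ w).differentiable).comp hd'
  -- Schwarz symmetry
  have key : ∀ (p a b : E),
      fderiv ℝ (fun z => fderiv ℝ h z b) p a = fderiv ℝ (fun z => fderiv ℝ h z a) p b := by
    intro p a b
    have happ : ∀ c : E, fderiv ℝ (fun z => fderiv ℝ h z c) p
        = (ContinuousLinearMap.apply ℝ ℝ c).comp (fderiv ℝ (fderiv ℝ h) p) :=
      fun c => (((ContinuousLinearMap.apply ℝ ℝ c).hasFDerivAt).comp p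
        (hd' p).hasFDerivAt).fderiv
    have hsymm := second_derivative_symmetric (f := h) (f' := fderiv ℝ h)
      (f'' := fderiv ℝ (fderiv ℝ h) p) (fun y => (hd y).hasFDerivAt)
      ((hd' p).hasFDerivAt) a b
    rw [happ, happ]
    simpa using hsymm
  -- linearity in q-directions
  have hlin : ∀ (f : E → ℝ) (p : E) (y : Fin 3 → ℝ),
      fderiv ℝ f p ((0 : ℝ), y) = ∑ A, y A * fderiv ℝ f p ((0 : ℝ), Pi.single A 1) := by
    intro f p y
    rw [decomp y, map_sum]
    exact Finset.sum_congr rfl fun A _ => by rw [map_smul, smul_eq_mul]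
  -- mixed e-q derivative of hq vanishes (Schwarz + hqe)
  have hq_e : ∀ (p : E) (B : Fin 3),
      fderiv ℝ (fun z => fderiv ℝ h z ((0 : ℝ), Pi.single B 1)) p
        ((1 : ℝ), (0 : Fin 3 → ℝ)) = 0 := by
    intro p B
    rw [key]
    exact hqe p B
  -- h_e depends only on e
  have he_q : ∀ (e : ℝ) (q : Fin 3 → ℝ),
      fderiv ℝ h (e, q) ((1 : ℝ), (0 : Fin 3 → ℝ))
        = fderiv ℝ h (e, (0 : Fin 3 → ℝ)) ((1 : ℝ), (0 : Fin 3 → ℝ)) := by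
    intro e q
    have h0 : ∀ p : E, fderiv ℝ (fun z => fderiv ℝ h z ((1 : ℝ), (0 : Fin 3 → ℝ))) p
        ((0 : ℝ), q) = 0 := by
      intro p
      rw [hlin]
      exact Finset.sum_eq_zero fun A _ => by rw [hqe p A, mul_zero]
    have := lineConst (fun z => fderiv ℝ h z ((1 : ℝ), (0 : Fin 3 → ℝ))) (hdw _)
      ((0 : ℝ), q) h0 ((e, 0) : E) 1
    simpa [Prod.ext_iff] using this
  -- h_{q_B} is independent of e
  have hq_noe : ∀ (e : ℝ) (y : Fin 3 → ℝ) (B : Fin 3),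
      fderiv ℝ h (e, y) ((0 : ℝ), Pi.single B 1)
        = fderiv ℝ h ((0 : ℝ), y) ((0 : ℝ), Pi.single B 1) := by
    intro e y B
    have := lineConst (fun z => fderiv ℝ h z ((0 : ℝ), Pi.single B 1)) (hdw _)
      ((1 : ℝ), (0 : Fin 3 → ℝ)) (fun p => hq_e p B) (((0 : ℝ), y) : E) e
    simpa [Prod.ext_iff] using this
  -- h_{q_B} depends only on q_B
  have hq_only : ∀ (e : ℝ) (q : Fin 3 → ℝ) (B : Fin 3),
      fderiv ℝ h (e, q) ((0 : ℝ), Pi.single B 1)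
        = fderiv ℝ h ((0 : ℝ), Pi.single B (q B)) ((0 : ℝ), Pi.single B 1) := by
    intro e q B
    rw [hq_noe]
    have h0 : ∀ p : E, fderiv ℝ (fun z => fderiv ℝ h z ((0 : ℝ), Pi.single B 1)) p
        ((0 : ℝ), q - Pi.single B (q B)) = 0 := by
      intro p
      rw [hlin]
      refine Finset.sum_eq_zero fun A _ => ?_
      by_cases hAB : A = B
      · subst hAB; simp
      · rw [hqq p A B hAB, mul_zero]
    have := lineConst (fun z => fderiv ℝ h z ((0 : ℝ), Pi.single B 1)) (hdw _)
      ((0 : ℝ), q - Pi.single B (q B)) h0 (((0 : ℝ), Pi.single B (q B)) : E) 1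
    simpa [Prod.ext_iff] using this
  -- transfer of directional derivatives along parallel lines
  have transfer : ∀ (f : E → ℝ), Differentiable ℝ f → ∀ (p p' v : E),
      (∀ s : ℝ, f (p + s • v) = f (p' + s • v)) →
      fderiv ℝ f p v = fderiv ℝ f p' v := by
    intro f hf p p' v hpp
    have d1 := lineDeriv' f hf p v 0
    have d2 := lineDeriv' f hf p' v 0
    rw [show (fun s : ℝ => f (p' + s • v)) = fun s : ℝ => f (p + s • v) from
      funext fun s => (hpp s).symm] at d2
    have := d1.unique d2
    simpa using this
  -- the second q_B-derivative is a universal constant κ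
  set κ : ℝ := fderiv ℝ (fun z => fderiv ℝ h z ((1 : ℝ), (0 : Fin 3 → ℝ)))
      ((0 : ℝ), (0 : Fin 3 → ℝ)) ((1 : ℝ), (0 : Fin 3 → ℝ)) / deriv Λt 0 with hκ
  have m_const : ∀ (p : E) (B : Fin 3),
      fderiv ℝ (fun z => fderiv ℝ h z ((0 : ℝ), Pi.single B 1)) p
        ((0 : ℝ), Pi.single B 1) = κ := by
    rintro ⟨e, q⟩ B
    have step1 : fderiv ℝ (fun z => fderiv ℝ h z ((0 : ℝ), Pi.single B 1)) ((e, q) : E)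
          ((0 : ℝ), Pi.single B 1)
        = fderiv ℝ (fun z => fderiv ℝ h z ((0 : ℝ), Pi.single B 1)) (((0 : ℝ), q) : E)
          ((0 : ℝ), Pi.single B 1) := by
      apply transfer _ (hdw _)
      intro s
      simpa [lineQ, single_smul'] using hq_noe e (q + Pi.single B s) B
    have step3 : fderiv ℝ (fun z => fderiv ℝ h z ((1 : ℝ), (0 : Fin 3 → ℝ)))
          (((0 : ℝ), q) : E) ((1 : ℝ), (0 : Fin 3 → ℝ))
        = fderiv ℝ (fun z => fderiv ℝ h z ((1 : ℝ), (0 : Fin 3 → ℝ)))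
          (((0 : ℝ), (0 : Fin 3 → ℝ)) : E) ((1 : ℝ), (0 : Fin 3 → ℝ)) := by
      apply transfer _ (hdw _)
      intro s
      simpa [lineE] using he_q s q
    have h2 := hee (((0 : ℝ), q) : E) B
    rw [step3] at h2
    rw [step1, hκ]
    rw [show deriv Λt (((0 : ℝ), q) : E).1 = deriv Λt 0 from rfl] at h2
    rw [h2]
    exact (mul_div_cancel_left₀ _ (hΛ' 0)).symm
  -- derivative of ψ(e) = h_e(e,·)
  have psi' : ∀ p : E, fderiv ℝ (fun z => fderiv ℝ h z ((1 : ℝ), (0 : Fin 3 → ℝ))) p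
      ((1 : ℝ), (0 : Fin 3 → ℝ)) = deriv Λt p.1 * κ := fun p => by
    rw [hee p 0, m_const]
  -- explicit form of h_e
  set c : ℝ := fderiv ℝ h ((0 : ℝ), (0 : Fin 3 → ℝ)) ((1 : ℝ), (0 : Fin 3 → ℝ))
      - κ * Λt 0 with hc
  have he_val : ∀ (e : ℝ) (q : Fin 3 → ℝ),
      fderiv ℝ h (e, q) ((1 : ℝ), (0 : Fin 3 → ℝ)) = κ * Λt e + c := by
    intro e q
    refine sameDeriv (fun s => fderiv ℝ h (s, q) ((1 : ℝ), (0 : Fin 3 → ℝ)))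
      (fun s => κ * Λt s + c) (fun s => deriv Λt s * κ) (fun t => ?_) (fun t => ?_) ?_ e
    · have := lineDerivE (fun z => fderiv ℝ h z ((1 : ℝ), (0 : Fin 3 → ℝ))) (hdw _) q t
      rwa [psi' ((t, q) : E)] at this
    · have := (((hΛ.differentiable (by norm_num)) t).hasDerivAt.const_mul κ).add_const c
      simpa [mul_comm] using this
    · show fderiv ℝ h ((0 : ℝ), q) ((1 : ℝ), (0 : Fin 3 → ℝ)) = κ * Λt 0 + c
      rw [he_q 0 q, hc]; ring
  -- explicit form of h_{q_B}
  set β : Fin 3 → ℝ := fun B => fderiv ℝ h ((0 : ℝ), (0 : Fin 3 → ℝ))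
      ((0 : ℝ), Pi.single B 1) with hβ
  have hq_val : ∀ (e : ℝ) (q : Fin 3 → ℝ) (B : Fin 3),
      fderiv ℝ h (e, q) ((0 : ℝ), Pi.single B 1) = κ * q B + β B := by
    intro e q B
    rw [hq_only e q B]
    have main : ∀ t : ℝ, fderiv ℝ h ((0 : ℝ), Pi.single B t) ((0 : ℝ), Pi.single B 1)
        = κ * t + β B := by
      refine sameDeriv (fun t => fderiv ℝ h ((0 : ℝ), Pi.single B t)
        ((0 : ℝ), Pi.single B 1)) (fun t => κ * t + β B) (fun _ => κ)
        (fun t => ?_) (fun t => ?_) ?_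
      · have := lineDerivQ (fun z => fderiv ℝ h z ((0 : ℝ), Pi.single B 1)) (hdw _)
          0 0 B t
        rw [m_const] at this
        simpa using this
      · simpa using (HasDerivAt.const_mul κ (hasDerivAt_id t)).add_const (β B)
      · simp [hβ]
    exact main (q B)
  -- reconstruction in e
  have R1 : ∀ (e : ℝ) (q : Fin 3 → ℝ),
      h (e, q) = κ * (∫ s in (0 : ℝ)..e, Λt s) + c * e + h ((0 : ℝ), q) := by
    intro e q
    refine sameDeriv (fun s => h (s, q))
      (fun s => κ * (∫ x in (0 : ℝ)..s, Λt x) + c * s + h ((0 : ℝ), q))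
      (fun s => κ * Λt s + c) (fun t => ?_) (fun t => ?_) ?_ e
    · have := lineDerivE h hd q t
      rwa [he_val t q] at this
    · have hint : HasDerivAt (fun u => ∫ x in (0 : ℝ)..u, Λt x) (Λt t) t :=
        (hΛ.continuous.integral_hasStrictDerivAt 0 t).hasDerivAt
      have := (hint.const_mul κ).add ((hasDerivAt_id t).const_mul c) |>.add_const
        (h ((0 : ℝ), q))
      simpa using this
    · simp
  -- peeling off q-coordinates
  have peel : ∀ (w : Fin 3 → ℝ) (B : Fin 3), w B = 0 → ∀ t : ℝ,
      h ((0 : ℝ), w + Pi.single B t)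
        = h ((0 : ℝ), w) + κ / 2 * t ^ 2 + β B * t := by
    intro w B hw
    refine sameDeriv (fun t => h ((0 : ℝ), w + Pi.single B t))
      (fun t => h ((0 : ℝ), w) + κ / 2 * t ^ 2 + β B * t)
      (fun t => κ * t + β B) (fun t => ?_) (fun t => ?_) ?_
    · have := lineDerivQ h hd 0 w B t
      rw [hq_val] at this
      simpa [hw] using this
    · have h1 := (HasDerivAt.const_mul (κ / 2) (hasDerivAt_pow 2 t)).const_add
        (h ((0 : ℝ), w))
      have h2 := HasDerivAt.const_mul (β B) (hasDerivAt_id' t)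
      have h3 := h1.fun_add h2
      convert h3 using 1 <;> try rfl
      push_cast
      ring
    · simp
  -- assembling h(0, q)
  have R2 : ∀ q : Fin 3 → ℝ, h ((0 : ℝ), q)
      = h ((0 : ℝ), (0 : Fin 3 → ℝ)) + κ / 2 * (∑ A, q A ^ 2) + ∑ A, β A * q A := by
    intro q
    have hsplit : q = ((0 : Fin 3 → ℝ) + Pi.single 0 (q 0)) + Pi.single 1 (q 1)
        + Pi.single 2 (q 2) := by
      funext A
      fin_cases A <;> simp [Pi.single_apply]
    have e2 := peel ((0 : Fin 3 → ℝ) + Pi.single 0 (q 0) + Pi.single 1 (q 1)) 2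
      (by simp [Pi.single_apply]) (q 2)
    have e1 := peel ((0 : Fin 3 → ℝ) + Pi.single 0 (q 0)) 1
      (by simp [Pi.single_apply]) (q 1)
    have e0 := peel (0 : Fin 3 → ℝ) 0 (by simp) (q 0)
    conv_lhs => rw [hsplit]
    rw [e2, e1, e0]
    simp only [Fin.sum_univ_three, Pi.add_apply, Pi.zero_apply, Pi.single_apply]
    norm_num
    ring
  refine ⟨κ / 2, c, h ((0 : ℝ), (0 : Fin 3 → ℝ)), β, ?_⟩
  intro e q
  rw [R1 e q, R2 q]
  ring
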